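/- Let μ be a σ-finite measure on a measurable space X, let ℓ : X → ℝ be measurable with ℓ(x) > 0 for μ-a.e. x and Z := ∫ ℓ dμ ∈ (0, ∞), and let π be the probability measure with density ℓ/Z with respect to μ. Let f₁, …, f_{N̂} : X → ℝ be measurable with f_i(x) > 0 for μ-a.e. x, and for w ∈ ℝ^{N̂} define g_w(x) := ∏_{i=1}^{N̂} f_i(x)^{w_i}. Let W ⊆ ℝ^{N̂} be any set of weight vectors such that for every w ∈ W: ∫ g_w dμ ∈ (0, ∞), the functions log ℓ and ∑_i w_i log f_i are π-integrable, and let q_w be the probability measure with density g_w / ∫ g_w dμ with respect to μ. Define the objective J(w) := ∫ (∑_{i=1}^{N̂} w_i log f_i) dπ − log ∫ exp(∑_{i=1}^{N̂} w_i log f_i − log ℓ) dπ. Then KL(π ‖ q_w) = ∫ log ℓ dπ − J(w) for every w ∈ W; consequently, w* ∈ W minimizes w ↦ KL(π ‖ q_w) over W if and only if w* maximizes J over W. In particular this holds for W equal to the intersection of the admissible weights with the affine set {w : ∑_{i=1}^{N̂} w_i = N*}. -/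

import Mathlib

open MeasureTheory Real

/-- The Kullback–Leibler divergence `KL(p ‖ q) = ∫ log (dp/dq) dp`. -/
noncomputable def klDiv {X : Type*} [MeasurableSpace X] (p q : Measure X) : ℝ :=
  ∫ x, Real.log ((p.rnDeriv q) x).toReal ∂p

/-- single-level objective. With posterior `p` of density
`ℓ/Z` w.r.t. `μ`, virtual-observation likelihoods `f i`, weighted likelihood
`gw w x = ∏ i, f i x ^ w i` and reconstructed posterior `q w`, for every
admissible weight vector `w ∈ W` we have `KL(p ‖ q w) = ∫ log ℓ dp − J w`,
where `J w = ∫ ∑ i, w i * log (f i) dp − log ∫ exp (∑ i, w i * log (f i) − log ℓ) dp`;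
hence `w* ∈ W` minimizes the KL divergence over `W` iff it maximizes `J` over `W`. -/
theorem single_level_objective
    {X : Type*} [MeasurableSpace X] (μ : Measure X) [SigmaFinite μ]
    (ℓ : X → ℝ) (hℓ_meas : Measurable ℓ) (hℓ_pos : ∀ᵐ x ∂μ, 0 < ℓ x)
    (hℓ_int : Integrable ℓ μ) (hZ_pos : 0 < ∫ x, ℓ x ∂μ)
    (p : Measure X)
    (hp : p = μ.withDensity (fun x => ENNReal.ofReal (ℓ x / ∫ x, ℓ x ∂μ)))
    (Nhat : ℕ) (f : Fin Nhat → X → ℝ)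
    (hf_meas : ∀ i, Measurable (f i)) (hf_pos : ∀ i, ∀ᵐ x ∂μ, 0 < f i x)
    (gw : (Fin Nhat → ℝ) → X → ℝ)
    (hgw : ∀ w x, gw w x = ∏ i : Fin Nhat, f i x ^ w i)
    (W : Set (Fin Nhat → ℝ))
    (hW_int : ∀ w ∈ W, Integrable (gw w) μ)
    (hW_pos : ∀ w ∈ W, 0 < ∫ x, gw w x ∂μ)
    (hlogℓ_int : Integrable (fun x => Real.log (ℓ x)) p)
    (hW_logf_int : ∀ w ∈ W,
      Integrable (fun x => ∑ i : Fin Nhat, w i * Real.log (f i x)) p)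
    (q : (Fin Nhat → ℝ) → Measure X)
    (hq : ∀ w, q w =
      μ.withDensity (fun x => ENNReal.ofReal (gw w x / ∫ x, gw w x ∂μ)))
    (J : (Fin Nhat → ℝ) → ℝ)
    (hJ : ∀ w, J w =
      (∫ x, ∑ i : Fin Nhat, w i * Real.log (f i x) ∂p) -
        Real.log (∫ x, Real.exp ((∑ i : Fin Nhat, w i * Real.log (f i x)) -
          Real.log (ℓ x)) ∂p)) :
    (∀ w ∈ W, klDiv p (q w) = (∫ x, Real.log (ℓ x) ∂p) - J w) ∧
      (∀ wstar ∈ W,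
        IsMinOn (fun w => klDiv p (q w)) W wstar ↔ IsMaxOn J W wstar) := by
  set Z := ∫ x, ℓ x ∂μ with hZdef
  have hZne : Z ≠ 0 := ne_of_gt hZ_pos
  have hpμ : p ≪ μ := hp ▸ withDensity_absolutelyContinuous μ _
  have hℓp : ∀ᵐ x ∂p, 0 < ℓ x := hℓ_pos.filter_mono hpμ.ae_le
  have hprob : IsProbabilityMeasure p := by
    constructor
    rw [hp, withDensity_apply _ MeasurableSet.univ, Measure.restrict_univ,
      ← ofReal_integral_eq_lintegral_ofReal (hℓ_int.div_const Z)
        (hℓ_pos.mono fun x hx => div_nonneg hx.le hZ_pos.le)]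
    rw [integral_div, ← hZdef, div_self hZne]
    exact ENNReal.ofReal_one
  haveI := hprob
  have key : ∀ w ∈ W, klDiv p (q w) = (∫ x, Real.log (ℓ x) ∂p) - J w := by
    intro w hw
    set Zw := ∫ x, gw w x ∂μ with hZwdef
    have hZw_pos := hW_pos w hw
    have hZwne : Zw ≠ 0 := ne_of_gt hZw_pos
    have hg_meas : Measurable (gw w) := by
      have he : gw w = fun x => ∏ i : Fin Nhat, f i x ^ w i := funext (hgw w)
      rw [he]
      exact Finset.measurable_prod _ (fun i _ => by fun_prop)
    have hg_pos : ∀ᵐ x ∂μ, 0 < gw w x := by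
      filter_upwards [(ae_all_iff).2 hf_pos] with x hx
      rw [hgw w x]
      exact Finset.prod_pos fun i _ => Real.rpow_pos_of_pos (hx i) _
    set d1 : X → ENNReal := fun x => ENNReal.ofReal (ℓ x / Z) with hd1
    set d2 : X → ENNReal := fun x => ENNReal.ofReal (gw w x / Zw) with hd2
    have hd1m : Measurable d1 := (hℓ_meas.div_const Z).ennreal_ofReal
    have hd2m : Measurable d2 := (hg_meas.div_const Zw).ennreal_ofReal
    have hDm : Measurable (fun x => d1 x / d2 x) := hd1m.div hd2m
    have hqw : q w = μ.withDensity d2 := hq w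
    haveI hq_fin : IsFiniteMeasure (q w) := by
      rw [hqw]
      refine isFiniteMeasure_withDensity ?_
      rw [hd2, ← ofReal_integral_eq_lintegral_ofReal ((hW_int w hw).div_const Zw)
        (hg_pos.mono fun x hx => div_nonneg hx.le hZw_pos.le)]
      exact ENNReal.ofReal_ne_top
    have h1 : p = (q w).withDensity (fun x => d1 x / d2 x) := by
      rw [hqw, ← withDensity_mul μ hd2m hDm, hp]
      refine withDensity_congr_ae ?_
      filter_upwards [hg_pos] with x hx
      have h0 : d2 x ≠ 0 := by
        simp only [hd2, ne_eq, ENNReal.ofReal_eq_zero, not_le]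
        exact div_pos hx hZw_pos
      calc d1 x = d1 x / d2 x * d2 x := (ENNReal.div_mul_cancel h0 ENNReal.ofReal_ne_top).symm
        _ = d2 x * (d1 x / d2 x) := mul_comm _ _
        _ = (d2 * fun x => d1 x / d2 x) x := rfl
    have hac : p ≪ q w := h1 ▸ withDensity_absolutelyContinuous _ _
    have hrn : p.rnDeriv (q w) =ᵐ[p] fun x => d1 x / d2 x := by
      have h2 := Measure.rnDeriv_withDensity (q w) hDm
      rw [← h1] at h2
      exact h2.filter_mono hac.ae_le
    have hgp : ∀ᵐ x ∂p, 0 < gw w x := hg_pos.filter_mono hpμ.ae_le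
    have hlogg : ∀ᵐ x ∂μ, Real.log (gw w x) = ∑ i : Fin Nhat, w i * Real.log (f i x) := by
      filter_upwards [(ae_all_iff).2 hf_pos] with x hx
      rw [hgw w x, Real.log_prod (fun i _ => (Real.rpow_pos_of_pos (hx i) _).ne')]
      exact Finset.sum_congr rfl fun i _ => Real.log_rpow (hx i) _
    have hloggp : ∀ᵐ x ∂p, Real.log (gw w x) = ∑ i : Fin Nhat, w i * Real.log (f i x) :=
      hlogg.filter_mono hpμ.ae_le
    have hSint : Integrable (fun x => ∑ i : Fin Nhat, w i * Real.log (f i x)) p :=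
      hW_logf_int w hw
    have hkl1 : klDiv p (q w) = ∫ x, (Real.log (ℓ x)
        - (∑ i : Fin Nhat, w i * Real.log (f i x)) + (Real.log Zw - Real.log Z)) ∂p := by
      unfold klDiv
      refine integral_congr_ae ?_
      filter_upwards [hrn, hℓp, hgp, hloggp] with x h1x h2x h3x h4x
      rw [h1x]
      have e1 : ((d1 x / d2 x).toReal) = (ℓ x / Z) / (gw w x / Zw) := by
        rw [ENNReal.toReal_div, hd1, hd2, ENNReal.toReal_ofReal (div_nonneg h2x.le hZ_pos.le),
          ENNReal.toReal_ofReal (div_nonneg h3x.le hZw_pos.le)]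
      rw [e1, Real.log_div (by positivity) (by positivity),
        Real.log_div (ne_of_gt h2x) hZne, Real.log_div (ne_of_gt h3x) hZwne, h4x]
      ring
    have hkl2 : ∫ x, (Real.log (ℓ x)
        - (∑ i : Fin Nhat, w i * Real.log (f i x)) + (Real.log Zw - Real.log Z)) ∂p
        = (∫ x, Real.log (ℓ x) ∂p) - (∫ x, ∑ i : Fin Nhat, w i * Real.log (f i x) ∂p)
          + (Real.log Zw - Real.log Z) := by
      have hsub : Integrable (fun x => Real.log (ℓ x)
          - ∑ i : Fin Nhat, w i * Real.log (f i x)) p := hlogℓ_int.sub hSint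
      rw [integral_add hsub (integrable_const _),
        integral_sub hlogℓ_int hSint, integral_const, probReal_univ]
      simp
    have hexp : ∫ x, Real.exp ((∑ i : Fin Nhat, w i * Real.log (f i x))
        - Real.log (ℓ x)) ∂p = Zw / Z := by
      rw [hp]
      have hcoe : (fun x => ENNReal.ofReal (ℓ x / Z))
          = fun x => (((ℓ x / Z).toNNReal : NNReal) : ENNReal) := rfl
      rw [hd1, hcoe, integral_withDensity_eq_integral_smul
        ((hℓ_meas.div_const Z).real_toNNReal) _]
      have hzz : ∫ x, gw w x / Z ∂μ = Zw / Z := by rw [integral_div, ← hZwdef]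
      rw [← hzz]
      refine integral_congr_ae ?_
      filter_upwards [hℓ_pos, hg_pos, hlogg] with x h1x h2x h3x
      rw [← h3x, Real.exp_sub, Real.exp_log h1x, Real.exp_log h2x]
      simp only [NNReal.smul_def, smul_eq_mul]
      rw [Real.coe_toNNReal _ (div_nonneg h1x.le hZ_pos.le)]
      field_simp
    rw [hkl1, hkl2, hJ w, hexp, Real.log_div hZwne hZne]
    ring
  refine ⟨key, fun wstar hws => ?_⟩
  constructor
  · intro h
    rw [isMaxOn_iff]
    intro y hy
    have hle := (isMinOn_iff.1 h) y hy
    have e1 := key wstar hws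
    have e2 := key y hy
    linarith
  · intro h
    rw [isMinOn_iff]
    intro y hy
    have hle := (isMaxOn_iff.1 h) y hy
    have e1 := key wstar hws
    have e2 := key y hy
    simp only [ge_iff_le]
    linarith
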